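/- Let F:ℝ→ℝ be nondecreasing and right-continuous with lim_{s→−∞}F(s)=0, let t₀∈ℝ be such that F is continuous on (−∞,t₀] and F(t₀)<1, and let μ_F be the Lebesgue–Stieltjes measure associated with F. Then for every t≤t₀, the cumulative hazard Λ(t)=∫_{(−∞,t]} (1−F(s))^{−1} dμ_F(s) satisfies 1−F(t)=exp(−Λ(t)), i.e. ∫_{(−∞,t]} (1−F(s))^{−1} dμ_F(s) = −log(1−F(t)). -/

import Mathlib

open MeasureTheory Set

/-- Key sublevel-set measure computation. -/
lemma stieltjes_measure_sublevel
    (F : StieltjesFunction ℝ) (hbot : Filter.Tendsto F Filter.atBot (nhds 0))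
    (t₀ : ℝ) (hcont : ContinuousOn (⇑F) (Iic t₀))
    (t : ℝ) (ht : t ≤ t₀) (y : ℝ) :
    F.measure ({s | F s ≤ y} ∩ Iic t) = ENNReal.ofReal (min y (F t)) := by
  have hFnonneg : ∀ s, 0 ≤ F s := by
    intro s
    refine le_of_tendsto hbot ?_
    filter_upwards [Filter.eventually_le_atBot s] with s' hs' using F.mono hs'
  have hIic : ∀ x, F.measure (Iic x) = ENNReal.ofReal (F x) := by
    intro x
    rw [F.measure_Iic hbot x, sub_zero]
  rcases le_or_gt (F t) y with hy | hy
  · have : {s | F s ≤ y} ∩ Iic t = Iic t := by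
      apply inter_eq_right.mpr
      intro s hs
      exact le_trans (F.mono hs) hy
    rw [this, hIic, min_eq_right hy]
  · -- y < F t
    set S := {s | F s ≤ y} with hS
    rw [min_eq_left hy.le]
    have hSsub : S ⊆ Iic t := by
      intro s hs
      simp only [mem_Iic]
      by_contra h
      push_neg at h
      exact absurd hs (not_le.mpr (lt_of_lt_of_le hy (F.mono h.le)))
    rcases eq_empty_or_nonempty S with hemp | hne
    · have hyle : y ≤ 0 := by
        by_contra hpos
        push_neg at hpos
        obtain ⟨s, hs⟩ := (hbot.eventually_lt_const hpos).exists
        exact absurd hemp (nonempty_iff_ne_empty.mp ⟨s, hs.le⟩)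
      rw [hemp, empty_inter, measure_empty, ENNReal.ofReal_eq_zero.mpr hyle]
    · -- S nonempty
      have hy0 : 0 ≤ y := by
        obtain ⟨s, hs⟩ := hne
        exact le_trans (hFnonneg s) hs
      have hbdd : BddAbove S := ⟨t, hSsub⟩
      set a := sSup S with ha
      have hat : a ≤ t := csSup_le hne hSsub
      -- F a ≤ y : a is in the closure of S, F continuous at a
      have hconta : ContinuousWithinAt (⇑F) S a := by
        have := (hcont a (le_trans hat ht)).mono (hSsub.trans (Iic_subset_Iic.mpr ht))
        exact this
      have hacl : a ∈ closure S := by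
        rcases hne with ⟨s0, hs0⟩
        exact csSup_mem_closure ⟨s0, hs0⟩ hbdd
      have hFa_le : F a ≤ y := by
        have h1 : F a ∈ closure (F '' S) := hconta.mem_closure_image hacl
        have h2 : closure (F '' S) ⊆ Iic y := by
          apply closure_minimal _ isClosed_Iic
          rintro _ ⟨s, hs, rfl⟩
          exact hs
        exact h2 h1
      -- F a ≥ y : by IVT
      obtain ⟨s1, hs1⟩ := hne
      have hs1t : s1 ≤ t := hSsub hs1
      have hFa_ge : y ≤ F a := by
        have hicc : Icc s1 t ⊆ Iic t₀ := fun x hx => le_trans hx.2 ht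
        have hIVT := intermediate_value_Icc hs1t (hcont.mono hicc)
        have hymem : y ∈ Icc (F s1) (F t) := ⟨hs1, hy.le⟩
        obtain ⟨s0, hs0m, hs0⟩ := hIVT hymem
        have : s0 ∈ S := le_of_eq hs0
        exact hs0 ▸ F.mono (le_csSup hbdd this)
      have hFa : F a = y := le_antisymm hFa_le hFa_ge
      have hSI : S = Iic a := by
        ext s
        constructor
        · intro hs; exact le_csSup hbdd hs
        · intro hs; exact le_trans (F.mono hs) (le_of_eq hFa)
      rw [inter_eq_left.mpr hSsub, hSI, hIic, hFa]

/-- Pushforward of the restricted Stieltjes measure is Lebesgue on `Ioc 0 (F t)`. -/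
lemma stieltjes_map_eq
    (F : StieltjesFunction ℝ) (hbot : Filter.Tendsto F Filter.atBot (nhds 0))
    (t₀ : ℝ) (hcont : ContinuousOn (⇑F) (Iic t₀))
    (t : ℝ) (ht : t ≤ t₀) :
    Measure.map (⇑F) (F.measure.restrict (Iic t)) = volume.restrict (Ioc 0 (F t)) := by
  have hFnonneg : ∀ s, 0 ≤ F s := by
    intro s
    refine le_of_tendsto hbot ?_
    filter_upwards [Filter.eventually_le_atBot s] with s' hs' using F.mono hs'
  have hFmeas : Measurable (⇑F) := F.mono.measurable
  have hfin : F.measure (Iic t) ≠ ⊤ := by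
    rw [F.measure_Iic hbot t]; exact ENNReal.ofReal_ne_top
  refine Measure.ext_of_Ioc' _ _ (fun c d hcd => ?_) (fun c d hcd => ?_)
  · rw [Measure.map_apply hFmeas measurableSet_Ioc,
      Measure.restrict_apply (hFmeas measurableSet_Ioc)]
    exact ne_top_of_le_ne_top hfin (measure_mono inter_subset_right)
  · rw [Measure.map_apply hFmeas measurableSet_Ioc,
      Measure.restrict_apply (hFmeas measurableSet_Ioc),
      Measure.restrict_apply measurableSet_Ioc]
    have hpre : ⇑F ⁻¹' Ioc c d ∩ Iic t
        = ({s | F s ≤ d} ∩ Iic t) \ ({s | F s ≤ c} ∩ Iic t) := by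
      ext s
      simp only [mem_inter_iff, mem_preimage, mem_Ioc, mem_Iic, mem_diff, mem_setOf_eq]
      constructor
      · rintro ⟨⟨h1, h2⟩, h3⟩
        exact ⟨⟨h2, h3⟩, fun hc => absurd hc.1 (not_le.mpr h1)⟩
      · rintro ⟨⟨h2, h3⟩, hc⟩
        refine ⟨⟨?_, h2⟩, h3⟩
        by_contra h
        push_neg at h
        exact hc ⟨h, h3⟩
    have hsubset : ({s | F s ≤ c} ∩ Iic t) ⊆ ({s | F s ≤ d} ∩ Iic t) :=
      inter_subset_inter_left _ (fun s hs => le_trans hs hcd.le)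
    have hmc : MeasurableSet ({s | F s ≤ c} ∩ Iic t) :=
      (hFmeas measurableSet_Iic).inter measurableSet_Iic
    have hfinc : F.measure ({s | F s ≤ c} ∩ Iic t) ≠ ⊤ :=
      ne_top_of_le_ne_top hfin (measure_mono inter_subset_right)
    rw [hpre, measure_diff hsubset hmc.nullMeasurableSet hfinc,
      stieltjes_measure_sublevel F hbot t₀ hcont t ht d,
      stieltjes_measure_sublevel F hbot t₀ hcont t ht c,
      Ioc_inter_Ioc, Real.volume_Ioc]
    have hFt : 0 ≤ F t := hFnonneg t
    rcases le_or_gt c 0 with hc0 | hc0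
    · rw [max_eq_right hc0, ENNReal.ofReal_eq_zero.mpr (le_trans (min_le_left _ _) hc0),
        tsub_zero, sub_zero]
    · rw [max_eq_left hc0.le]
      rcases le_or_gt c (F t) with hcF | hcF
      · rw [← ENNReal.ofReal_sub _ (le_min hc0.le hFt), min_eq_left hcF]
      · have h1 : min d (F t) = F t := min_eq_right (le_of_lt (hcF.trans hcd))
        have h2 : min c (F t) = F t := min_eq_right hcF.le
        rw [h1, h2, tsub_self]
        exact (ENNReal.ofReal_eq_zero.mpr (by linarith)).symm

/-- for a nondecreasing right-continuous `F` with `F(-∞) = 0`, continuous on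
`(-∞, t₀]` and with `F(t₀) < 1`, the cumulative hazard satisfies
`∫_{(-∞,t]} (1 - F(s))⁻¹ dμ_F(s) = -log(1 - F(t))`, i.e. `1 - F(t) = exp(-Λ(t))`,
for every `t ≤ t₀`. -/
theorem cumulative_hazard_eq_neg_log
    (F : StieltjesFunction ℝ) (hbot : Filter.Tendsto F Filter.atBot (nhds 0))
    (t₀ : ℝ) (hcont : ContinuousOn (⇑F) (Iic t₀)) (hF1 : F t₀ < 1)
    (t : ℝ) (ht : t ≤ t₀) :
    ∫ s in Iic t, (1 - F s)⁻¹ ∂F.measure = -Real.log (1 - F t) := by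
  have hFnonneg : 0 ≤ F t := by
    refine le_of_tendsto hbot ?_
    filter_upwards [Filter.eventually_le_atBot t] with s' hs' using F.mono hs'
  have hFt1 : F t < 1 := lt_of_le_of_lt (F.mono ht) hF1
  have hFmeas : Measurable (⇑F) := F.mono.measurable
  have hmap := stieltjes_map_eq F hbot t₀ hcont t ht
  have hg : Measurable fun x : ℝ => (1 - x)⁻¹ :=
    (measurable_const.sub measurable_id).inv
  calc ∫ s in Iic t, (1 - F s)⁻¹ ∂F.measure
      = ∫ x, (1 - x)⁻¹ ∂(Measure.map (⇑F) (F.measure.restrict (Iic t))) := by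
        rw [integral_map hFmeas.aemeasurable hg.aestronglyMeasurable]
    _ = ∫ x in Ioc 0 (F t), (1 - x)⁻¹ := by rw [hmap]
    _ = ∫ x in (0 : ℝ)..(F t), (1 - x)⁻¹ := by
        rw [intervalIntegral.integral_of_le hFnonneg]
    _ = ∫ x in (1 - F t)..(1 - 0 : ℝ), x⁻¹ := by
        rw [← intervalIntegral.integral_comp_sub_left (fun x => x⁻¹) 1]
    _ = -Real.log (1 - F t) := by
        rw [sub_zero, integral_inv (by
          rw [Set.uIcc_of_le (by linarith)]
          intro h
          exact absurd h.1 (by linarith))]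
        rw [Real.log_div one_ne_zero (by linarith), Real.log_one, zero_sub]
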